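/- Viewing the empirical covariance P^{xx} as a function of the particle positions, its divergence with respect to the i-th particle satisfies ∇_{x^{(i)}} · P^{xx} = ((n+1)/M)(x^{(i)} − x̄), where the divergence of a matrix field is taken row-wise: (∇_x · P)_k = ∑_l ∂P_{kl}/∂x_l. -/

import Mathlib

open Matrix BigOperators

/-- The empirical covariance matrix of the particles `xs`. -/
noncomputable def empCov {n M : ℕ} (xs : Fin M → (Fin n → ℝ)) :
    Matrix (Fin n) (Fin n) ℝ :=
  (M : ℝ)⁻¹ • ∑ j, Matrix.vecMulVec (xs j - (M : ℝ)⁻¹ • ∑ i, xs i)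
    (xs j - (M : ℝ)⁻¹ • ∑ i, xs i)

lemma empCov_apply' {n M : ℕ} (xs : Fin M → (Fin n → ℝ)) (k l : Fin n) :
    empCov xs k l = (M : ℝ)⁻¹ * ∑ j, (xs j k - (M : ℝ)⁻¹ * ∑ j', xs j' k) *
      (xs j l - (M : ℝ)⁻¹ * ∑ j', xs j' l) := by
  simp [empCov, Matrix.vecMulVec_apply, Matrix.sum_apply, Finset.sum_apply]

/-- Viewing the empirical covariance `Pˣˣ` as a function of the particle
positions, its row-wise divergence with respect to the `i`-th particle satisfies
`∇_{xᵢ} · Pˣˣ = ((n+1)/M)(xᵢ - x̄)`, i.e. for each row `k`,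
`∑ₗ ∂(Pˣˣ)ₖₗ/∂xᵢₗ = ((n+1)/M)(xᵢ - x̄)ₖ`. -/
theorem divergence_empCov (n M : ℕ) (x : Fin M → (Fin n → ℝ)) (i : Fin M) :
    ∀ k : Fin n,
      ∑ l : Fin n,
        deriv (fun s : ℝ =>
          empCov (Function.update x i (Function.update (x i) l s)) k l) (x i l)
      = ((n : ℝ) + 1) / (M : ℝ) * (x i k - ((M : ℝ)⁻¹ • ∑ j, x j) k) := by
  intro k
  have hM : (M : ℝ) ≠ 0 := Nat.cast_ne_zero.2 i.pos.ne'
  -- zero-sum fact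
  have hz : ∀ k' : Fin n, ∑ j, (x j k' - (M : ℝ)⁻¹ * ∑ j', x j' k') = 0 := by
    intro k'
    rw [Finset.sum_sub_distrib, Finset.sum_const, Finset.card_univ, Fintype.card_fin,
      nsmul_eq_mul]
    field_simp
    simp
  -- the key derivative computation
  have key : ∀ l : Fin n,
      HasDerivAt (fun s : ℝ => empCov (Function.update x i (Function.update (x i) l s)) k l)
        ((M : ℝ)⁻¹ * ∑ j,
          (((if j = i ∧ k = l then (1:ℝ) else 0) - (M : ℝ)⁻¹ * (if k = l then 1 else 0)) *
              (x j l - (M : ℝ)⁻¹ * ∑ j', x j' l)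
            + (x j k - (M : ℝ)⁻¹ * ∑ j', x j' k) *
              ((if j = i then (1:ℝ) else 0) - (M : ℝ)⁻¹)))
        (x i l) := by
    intro l
    have hY : ∀ (j : Fin M) (k' : Fin n),
        HasDerivAt (fun s : ℝ => Function.update x i (Function.update (x i) l s) j k')
          (if j = i ∧ k' = l then 1 else 0) (x i l) := by
      intro j k'
      rcases eq_or_ne j i with hj | hj
      · subst hj
        rcases eq_or_ne k' l with hk | hk
        · subst hk
          simp only [Function.update_self, and_self, if_true]
          exact hasDerivAt_id _
        · simp only [Function.update_self, Function.update_of_ne hk, hk, and_false, if_false]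
          exact hasDerivAt_const _ _
      · simp only [Function.update_of_ne hj, hj, false_and, if_false]
        exact hasDerivAt_const _ _
    have hmean : ∀ k' : Fin n,
        HasDerivAt (fun s : ℝ => (M : ℝ)⁻¹ * ∑ j', Function.update x i
            (Function.update (x i) l s) j' k')
          ((M : ℝ)⁻¹ * (if k' = l then 1 else 0)) (x i l) := by
      intro k'
      have hsum : (∑ j : Fin M, if j = i ∧ k' = l then (1:ℝ) else 0)
          = if k' = l then 1 else 0 := by
        by_cases h : k' = l <;> simp [h]
      have := (HasDerivAt.fun_sum (fun j (_ : j ∈ Finset.univ) => hY j k')).const_mul ((M : ℝ)⁻¹)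
      rwa [hsum] at this
    have hx : Function.update x i (Function.update (x i) l (x i l)) = x := by
      rw [Function.update_eq_self, Function.update_eq_self]
    have hterm : ∀ j : Fin M,
        HasDerivAt (fun s : ℝ =>
          (Function.update x i (Function.update (x i) l s) j k
            - (M : ℝ)⁻¹ * ∑ j', Function.update x i (Function.update (x i) l s) j' k) *
          (Function.update x i (Function.update (x i) l s) j l
            - (M : ℝ)⁻¹ * ∑ j', Function.update x i (Function.update (x i) l s) j' l))
          (((if j = i ∧ k = l then (1:ℝ) else 0) - (M : ℝ)⁻¹ * (if k = l then 1 else 0)) *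
              (x j l - (M : ℝ)⁻¹ * ∑ j', x j' l)
            + (x j k - (M : ℝ)⁻¹ * ∑ j', x j' k) *
              ((if j = i then (1:ℝ) else 0) - (M : ℝ)⁻¹)) (x i l) := by
      intro j
      have h1 := ((hY j k).fun_sub (hmean k)).fun_mul ((hY j l).fun_sub (hmean l))
      simp only [hx] at h1
      convert h1 using 2
      · rfl
      · rfl
      · simp
    have hfin := (HasDerivAt.fun_sum (fun j (_ : j ∈ Finset.univ) => hterm j)).const_mul ((M : ℝ)⁻¹)
    have heq : (fun s : ℝ => empCov (Function.update x i (Function.update (x i) l s)) k l)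
        = fun s : ℝ => (M : ℝ)⁻¹ * ∑ j,
          (Function.update x i (Function.update (x i) l s) j k
            - (M : ℝ)⁻¹ * ∑ j', Function.update x i (Function.update (x i) l s) j' k) *
          (Function.update x i (Function.update (x i) l s) j l
            - (M : ℝ)⁻¹ * ∑ j', Function.update x i (Function.update (x i) l s) j' l) := by
      funext s; exact empCov_apply' _ k l
    rw [heq]
    exact hfin
  -- replace deriv by the computed value
  have hderiv : ∀ l : Fin n,
      deriv (fun s : ℝ => empCov (Function.update x i (Function.update (x i) l s)) k l)
        (x i l)
      = (M : ℝ)⁻¹ * ∑ j,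
          (((if j = i ∧ k = l then (1:ℝ) else 0) - (M : ℝ)⁻¹ * (if k = l then 1 else 0)) *
              (x j l - (M : ℝ)⁻¹ * ∑ j', x j' l)
            + (x j k - (M : ℝ)⁻¹ * ∑ j', x j' k) *
              ((if j = i then (1:ℝ) else 0) - (M : ℝ)⁻¹)) :=
    fun l => (key l).deriv
  rw [Finset.sum_congr rfl fun l _ => hderiv l]
  -- simplify each inner sum
  have hD : ∀ l : Fin n,
      (M : ℝ)⁻¹ * ∑ j,
          (((if j = i ∧ k = l then (1:ℝ) else 0) - (M : ℝ)⁻¹ * (if k = l then 1 else 0)) *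
              (x j l - (M : ℝ)⁻¹ * ∑ j', x j' l)
            + (x j k - (M : ℝ)⁻¹ * ∑ j', x j' k) *
              ((if j = i then (1:ℝ) else 0) - (M : ℝ)⁻¹))
      = (M : ℝ)⁻¹ * ((if k = l then (x i k - (M : ℝ)⁻¹ * ∑ j', x j' k) else 0)
          + (x i k - (M : ℝ)⁻¹ * ∑ j', x j' k)) := by
    intro l
    congr 1
    rw [Finset.sum_add_distrib]
    congr 1
    · simp only [sub_mul, ite_mul, one_mul, zero_mul]
      rw [Finset.sum_sub_distrib, ← Finset.mul_sum, hz l, mul_zero, sub_zero]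
      by_cases h : k = l
      · subst h; simp
      · simp [h]
    · simp only [mul_sub, mul_ite, mul_one, mul_zero]
      rw [Finset.sum_sub_distrib, ← Finset.sum_mul, hz k, zero_mul, sub_zero]
      simp
  rw [Finset.sum_congr rfl fun l _ => hD l]
  -- final algebra
  have hsmul : ((M : ℝ)⁻¹ • ∑ j, x j) k = (M : ℝ)⁻¹ * ∑ j', x j' k := by
    simp [Finset.sum_apply]
  rw [hsmul]
  rw [← Finset.mul_sum, Finset.sum_add_distrib, Finset.sum_ite_eq Finset.univ k
    (fun _ => x i k - (M : ℝ)⁻¹ * ∑ j', x j' k), Finset.sum_const, Finset.card_univ,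
    Fintype.card_fin, nsmul_eq_mul]
  simp only [Finset.mem_univ, if_true]
  field_simp
  ring
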